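/- arXiv:1308.2644 — 3 statements merged into one kernel-verified Lean document; each statement's English description precedes it below -/
import Mathlib

section
/- For every natural number m ≥ 1 and every natural number k ≥ 1, ∫₀¹ (1 − (1−p)^{k+1})^m dp ≤ Γ(1 + 1/(k+1)) · m^{−1/(k+1)}. -/
open Real MeasureTheory Set intervalIntegral

/-- For `m, k ≥ 1`,
`∫₀¹ (1 − (1−p)^{k+1})^m dp ≤ Γ(1 + 1/(k+1)) · m^{−1/(k+1)}`. -/
theorem stmt8 (m k : ℕ) (hm : 1 ≤ m) (hk : 1 ≤ k) :
    ∫ p in (0:ℝ)..1, (1 - (1 - p) ^ (k + 1)) ^ m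
      ≤ Real.Gamma (1 + 1 / (k + 1)) * (m : ℝ) ^ (-(1 : ℝ) / (k + 1)) := by
  have hm0 : (0:ℝ) < m := by exact_mod_cast hm
  have hK : (0:ℝ) < (k:ℝ) + 1 := by positivity
  -- Step 1: pointwise bound by exponential
  have step1 : ∫ p in (0:ℝ)..1, (1 - (1 - p) ^ (k + 1)) ^ m
      ≤ ∫ p in (0:ℝ)..1, Real.exp (-(m:ℝ) * (1 - p) ^ (k + 1)) := by
    apply intervalIntegral.integral_mono_on (by norm_num)
    · exact (Continuous.intervalIntegrable (by continuity) _ _)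
    · exact (Continuous.intervalIntegrable (by continuity) _ _)
    · intro p hp
      have h1 : (0:ℝ) ≤ 1 - p := by linarith [hp.2]
      have h2 : (1 - p) ^ (k+1) ≤ 1 := pow_le_one₀ h1 (by linarith [hp.1])
      have h3 : (0:ℝ) ≤ 1 - (1 - p) ^ (k+1) := by linarith
      calc (1 - (1 - p) ^ (k + 1)) ^ m
          ≤ (Real.exp (-(1 - p) ^ (k+1))) ^ m := by
            apply pow_le_pow_left₀ h3
            linarith [Real.add_one_le_exp (-(1 - p) ^ (k+1))]
        _ = Real.exp (-(m:ℝ) * (1 - p) ^ (k + 1)) := by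
            rw [← Real.exp_nat_mul]; ring_nf
  -- Step 2: substitute q = 1 - p
  have step2 : ∫ p in (0:ℝ)..1, Real.exp (-(m:ℝ) * (1 - p) ^ (k + 1))
      = ∫ q in (0:ℝ)..1, Real.exp (-(m:ℝ) * q ^ (k + 1)) := by
    have := intervalIntegral.integral_comp_sub_left
      (fun q => Real.exp (-(m:ℝ) * q ^ (k + 1))) (1:ℝ) (a := 0) (b := 1)
    simpa using this
  -- Step 3: bound by integral over Ioi 0 and evaluate
  have step3 : ∫ q in (0:ℝ)..1, Real.exp (-(m:ℝ) * q ^ (k + 1))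
      ≤ ∫ q in Ioi (0:ℝ), Real.exp (-(m:ℝ) * q ^ ((k:ℝ) + 1)) := by
    rw [intervalIntegral.integral_of_le (by norm_num)]
    have hint : IntegrableOn (fun q => Real.exp (-(m:ℝ) * q ^ ((k:ℝ) + 1))) (Ioi (0:ℝ)) := by
      have := integrableOn_rpow_mul_exp_neg_mul_rpow (s := 0) (p := (k:ℝ)+1) (b := (m:ℝ))
        (by norm_num) (by linarith) hm0
      simpa [Real.rpow_zero] using this
    have heq : ∀ q ∈ Ioc (0:ℝ) 1,
        Real.exp (-(m:ℝ) * q ^ (k + 1)) = Real.exp (-(m:ℝ) * q ^ ((k:ℝ) + 1)) := by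
      intro q hq
      rw [show ((k:ℝ)+1) = ((k+1 : ℕ) : ℝ) by push_cast; ring, Real.rpow_natCast]
    rw [setIntegral_congr_fun measurableSet_Ioc heq]
    apply setIntegral_mono_set hint
    · filter_upwards with q using (Real.exp_pos _).le
    · exact HasSubset.Subset.eventuallyLE Ioc_subset_Ioi_self
  have step4 : ∫ q in Ioi (0:ℝ), Real.exp (-(m:ℝ) * q ^ ((k:ℝ) + 1))
      = (m:ℝ) ^ (-(1:ℝ) / ((k:ℝ)+1)) * Real.Gamma (1 / ((k:ℝ)+1) + 1) := by
    have := integral_exp_neg_mul_rpow (p := (k:ℝ)+1) (b := (m:ℝ)) (by linarith) hm0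
    simpa using this
  calc ∫ p in (0:ℝ)..1, (1 - (1 - p) ^ (k + 1)) ^ m
      ≤ ∫ q in Ioi (0:ℝ), Real.exp (-(m:ℝ) * q ^ ((k:ℝ) + 1)) := by
        rw [← step2] at step3; linarith
    _ = Real.Gamma (1 + 1 / (k + 1)) * (m : ℝ) ^ (-(1 : ℝ) / (k + 1)) := by
        rw [step4]; ring
end

section
/- The function f : ℕ → ℝ defined for k ≥ 1 by f(k) = Γ(1 + 1/(k+1)) · (k+1)^{1/(k+1)} attains its maximum over the positive integers at k = 2; i.e., for all integers k ≥ 1, Γ(1 + 1/(k+1)) · (k+1)^{1/(k+1)} ≤ Γ(4/3) · 3^{1/3}. -/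
open Real Finset

-- ratio identity
lemma gammaSeq_succ_eq (x : ℝ) (hx : 0 < x) (n : ℕ) (hn : 1 ≤ n) :
    Real.GammaSeq x (n + 1)
      = Real.GammaSeq x n * (((n : ℝ) + 1) / n) ^ x * (((n : ℝ) + 1) / (x + (n + 1))) := by
  have hP : ∀ m : ℕ, 0 < ∏ j ∈ range (m + 1), (x + j) := by
    intro m
    exact Finset.prod_pos fun j _ => by positivity
  have hn0 : (0:ℝ) < n := by exact_mod_cast hn
  have hrp : (((n : ℝ) + 1) / n) ^ x = ((n : ℝ) + 1) ^ x / (n : ℝ) ^ x :=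
    Real.div_rpow (by positivity) hn0.le x
  rw [Real.GammaSeq, Real.GammaSeq, Finset.prod_range_succ, Nat.factorial_succ, hrp]
  have h1 : (x + ((n : ℝ) + 1)) ≠ 0 := by positivity
  have h2 : ((n : ℝ)) ^ x ≠ 0 := by positivity
  have h3 : (∏ j ∈ range (n + 1), (x + j)) ≠ 0 := (hP n).ne'
  push_cast
  field_simp

lemma gammaSeq_pos (x : ℝ) (hx : 0 < x) (n : ℕ) (hn : 1 ≤ n) : 0 < Real.GammaSeq x n := by
  rw [Real.GammaSeq]
  have hP : 0 < ∏ j ∈ range (n + 1), (x + j) := Finset.prod_pos fun j _ => by positivity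
  have hn0 : (0:ℝ) < n := by exact_mod_cast hn
  have hf : (0:ℝ) < (n.factorial : ℝ) := by exact_mod_cast Nat.factorial_pos n
  positivity

-- Bernoulli upper: (1 + t)^x ≤ 1 + x t  for 0 ≤ x ≤ 1, 0 ≤ t
-- is rpow_one_add_le_one_add_mul_self

-- key: 1 + x/(n+1) ≤ ((n+1)/n)^x for 0 < x ≤ 1, 1 ≤ n
lemma bern_lower (x : ℝ) (hx0 : 0 ≤ x) (hx1 : x ≤ 1) (n : ℕ) (hn : 1 ≤ n) :
    1 + x / ((n : ℝ) + 1) ≤ (((n : ℝ) + 1) / n) ^ x := by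
  have hn0 : (0:ℝ) < n := by exact_mod_cast hn
  have hn1 : (0:ℝ) < (n:ℝ) + 1 := by positivity
  have hs : (-1 : ℝ) ≤ -(1 / ((n:ℝ) + 1)) := by
    rw [neg_le_neg_iff]
    rw [div_le_one hn1]; linarith
  have h1 : ((n : ℝ) / (n + 1)) ^ x ≤ 1 - x / ((n:ℝ) + 1) := by
    have := rpow_one_add_le_one_add_mul_self hs hx0 hx1
    have he : (1 : ℝ) + -(1 / ((n:ℝ) + 1)) = (n : ℝ) / (n + 1) := by
      field_simp
      ring
    rw [he] at this
    calc ((n : ℝ) / (n + 1)) ^ x ≤ 1 + x * -(1 / ((n:ℝ)+1)) := this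
      _ = 1 - x / ((n:ℝ) + 1) := by ring
  have hpos : (0:ℝ) < (n : ℝ) / (n + 1) := by positivity
  have hxlt : x / ((n:ℝ) + 1) < 1 := by
    rw [div_lt_one hn1]; linarith
  have h2 : (0:ℝ) < 1 - x / ((n:ℝ) + 1) := by linarith
  have hinv : (((n : ℝ) + 1) / n) ^ x = (((n : ℝ) / (n + 1)) ^ x)⁻¹ := by
    rw [show ((n:ℝ)+1)/n = ((n:ℝ)/(n+1))⁻¹ by rw [inv_div], Real.inv_rpow hpos.le]
  rw [hinv]
  rw [le_inv_comm₀ (by positivity) (by positivity)]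
  calc ((n : ℝ) / (n + 1)) ^ x ≤ 1 - x / ((n:ℝ) + 1) := h1
    _ ≤ (1 + x / ((n:ℝ) + 1))⁻¹ := by
        rw [← one_div, le_div_iff₀ (by positivity)]
        nlinarith [sq_nonneg (x / ((n:ℝ)+1))]

lemma gammaSeq_mono_step (x : ℝ) (hx : 0 < x) (hx1 : x ≤ 1) (n : ℕ) (hn : 1 ≤ n) :
    Real.GammaSeq x n ≤ Real.GammaSeq x (n + 1) := by
  rw [gammaSeq_succ_eq x hx n hn]
  have hpos := gammaSeq_pos x hx n hn
  have hn1 : (0:ℝ) < (n:ℝ) + 1 := by positivity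
  have hkey := bern_lower x hx.le hx1 n hn
  have hden : (0:ℝ) < x + ((n:ℝ) + 1) := by positivity
  have h2 : (1:ℝ) ≤ (((n : ℝ) + 1) / n) ^ x * (((n : ℝ) + 1) / (x + (n + 1))) := by
    rw [← div_le_iff₀ (by positivity)]
    calc (1:ℝ) / (((n:ℝ)+1)/(x+(n+1))) = (x + ((n:ℝ)+1)) / ((n:ℝ)+1) := by
          rw [one_div, inv_div]
      _ = 1 + x / ((n:ℝ)+1) := by field_simp; ring
      _ ≤ _ := hkey
  calc Real.GammaSeq x n = Real.GammaSeq x n * 1 := by ring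
    _ ≤ Real.GammaSeq x n * ((((n : ℝ) + 1) / n) ^ x * (((n : ℝ) + 1) / (x + (n + 1)))) :=
        by exact mul_le_mul_of_nonneg_left h2 hpos.le
    _ = _ := by ring

lemma gammaSeq_anti_step (x : ℝ) (hx : 0 < x) (hx1 : x ≤ 1) (n : ℕ) (hn : 1 ≤ n) :
    Real.GammaSeq x (n+1) * (((n : ℝ) + 2) / (n + 1)) ^ x
      ≤ Real.GammaSeq x n * (((n : ℝ) + 1) / n) ^ x := by
  rw [gammaSeq_succ_eq x hx n hn]
  have hpos := gammaSeq_pos x hx n hn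
  have hn1 : (0:ℝ) < (n:ℝ) + 1 := by positivity
  have hrp : (0:ℝ) ≤ (((n : ℝ) + 1) / n) ^ x := Real.rpow_nonneg (by positivity) x
  have hb : (((n : ℝ) + 2) / (n + 1)) ^ x ≤ 1 + x / ((n:ℝ)+1) := by
    have hs : (-1 : ℝ) ≤ 1 / ((n:ℝ) + 1) := by
      have : (0:ℝ) ≤ 1 / ((n:ℝ)+1) := by positivity
      linarith
    have := rpow_one_add_le_one_add_mul_self hs hx.le hx1
    have he : (1 : ℝ) + 1 / ((n:ℝ) + 1) = ((n : ℝ) + 2) / (n + 1) := by field_simp; ring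
    rw [he] at this
    calc (((n : ℝ) + 2) / (n + 1)) ^ x ≤ 1 + x * (1 / ((n:ℝ)+1)) := this
      _ = 1 + x / ((n:ℝ)+1) := by ring
  have hkey : (((n : ℝ) + 1) / (x + (n + 1))) * (((n : ℝ) + 2) / (n + 1)) ^ x ≤ 1 := by
    rw [← le_div_iff₀' (by positivity)]
    calc (((n : ℝ) + 2) / (n + 1)) ^ x ≤ 1 + x / ((n:ℝ)+1) := hb
      _ = (x + ((n:ℝ)+1)) / ((n:ℝ)+1) := by field_simp; ring
      _ = 1 / (((n:ℝ)+1)/(x+((n:ℝ)+1))) := by rw [one_div, inv_div]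
  calc Real.GammaSeq x n * (((n : ℝ) + 1) / n) ^ x * (((n : ℝ) + 1) / (x + (n + 1)))
        * (((n : ℝ) + 2) / (n + 1)) ^ x
      = (Real.GammaSeq x n * (((n : ℝ) + 1) / n) ^ x)
        * ((((n : ℝ) + 1) / (x + (n + 1))) * (((n : ℝ) + 2) / (n + 1)) ^ x) := by ring
    _ ≤ (Real.GammaSeq x n * (((n : ℝ) + 1) / n) ^ x) * 1 :=
        mul_le_mul_of_nonneg_left hkey (by positivity)
    _ = _ := by ring

lemma gammaSeq_le_gammaSeq (x : ℝ) (hx : 0 < x) (hx1 : x ≤ 1) {n m : ℕ} (hn : 1 ≤ n)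
    (hnm : n ≤ m) : Real.GammaSeq x n ≤ Real.GammaSeq x m := by
  induction m, hnm using Nat.le_induction with
  | base => exact le_rfl
  | succ m hm ih => exact ih.trans (gammaSeq_mono_step x hx hx1 m (hn.trans hm))

lemma gammaSeq_le_Gamma (x : ℝ) (hx : 0 < x) (hx1 : x ≤ 1) (n : ℕ) (hn : 1 ≤ n) :
    Real.GammaSeq x n ≤ Real.Gamma x :=
  ge_of_tendsto (Real.GammaSeq_tendsto_Gamma x)
    (Filter.eventually_atTop.2 ⟨n, fun m hm => gammaSeq_le_gammaSeq x hx hx1 hn hm⟩)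

lemma Gamma_le_gammaSeq (x : ℝ) (hx : 0 < x) (hx1 : x ≤ 1) (n : ℕ) (hn : 1 ≤ n) :
    Real.Gamma x ≤ Real.GammaSeq x n * (((n : ℝ) + 1) / n) ^ x := by
  refine le_of_tendsto (Real.GammaSeq_tendsto_Gamma x)
    (Filter.eventually_atTop.2 ⟨n, fun m hm => ?_⟩)
  have hchain : Real.GammaSeq x m * (((m : ℝ) + 1) / m) ^ x
      ≤ Real.GammaSeq x n * (((n : ℝ) + 1) / n) ^ x := by
    induction m, hm using Nat.le_induction with
    | base => exact le_rfl
    | succ m hm2 ih =>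
        refine le_trans ?_ ih
        have := gammaSeq_anti_step x hx hx1 m (hn.trans hm2)
        have hcast : ((((m:ℕ)+1 : ℕ) : ℝ) + 1) / (((m:ℕ)+1 : ℕ) : ℝ) = ((m:ℝ)+2) / (↑m+1) := by
          push_cast; ring_nf
        rw [hcast]
        exact this
  refine le_trans ?_ hchain
  have hm1 : 1 ≤ m := hn.trans hm
  have hm0 : (0:ℝ) < m := by exact_mod_cast hm1
  have h1 : (1:ℝ) ≤ (((m : ℝ) + 1) / m) ^ x :=
    Real.one_le_rpow (by rw [le_div_iff₀ hm0]; linarith) hx.le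
  calc Real.GammaSeq x m = Real.GammaSeq x m * 1 := by ring
    _ ≤ _ := mul_le_mul_of_nonneg_left h1 (gammaSeq_pos x hx m hm1).le


lemma fact100 : Nat.factorial 100 = 93326215443944152681699238856266700490715968264381621468592963895217599993229915608941463976156518286253697920827223758251185210916864000000000000000000000000 := by decide

lemma prodA3 : (∏ j ∈ Finset.range 101, (1+3*j)) = 250562875195690847489633288356592470242541053814057075797114553145734877680091554479312815921528836155924798302732241793371810022104427534261096812562086993446214813761423250062049280000000000000000000000000 := by decide

lemma prodA4 : (∏ j ∈ Finset.range 101, (1+4*j)) = 524032950851270190154042028854052437288528638239309802688602831806751415825199285771312450250337206638174310074899758879368556965719450506408514442666451783424884073283673891033571350657257742940130530893802642822265625 := by decide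

lemma prod_third : ∏ j ∈ Finset.range 101, ((1:ℝ)/3 + j) = 250562875195690847489633288356592470242541053814057075797114553145734877680091554479312815921528836155924798302732241793371810022104427534261096812562086993446214813761423250062049280000000000000000000000000 / 3^101 := by
  have h1 : ∀ j ∈ Finset.range 101, ((1:ℝ)/3 + j) = ((1+3*j : ℕ) : ℝ)/3 := by
    intro j _; push_cast; ring
  rw [Finset.prod_congr rfl h1, Finset.prod_div_distrib, Finset.prod_const,
    ← Nat.cast_prod, prodA3]
  norm_num

lemma prod_quarter : ∏ j ∈ Finset.range 101, ((1:ℝ)/4 + j) = 524032950851270190154042028854052437288528638239309802688602831806751415825199285771312450250337206638174310074899758879368556965719450506408514442666451783424884073283673891033571350657257742940130530893802642822265625 / 4^101 := by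
  have h1 : ∀ j ∈ Finset.range 101, ((1:ℝ)/4 + j) = ((1+4*j : ℕ) : ℝ)/4 := by
    intro j _; push_cast; ring
  rw [Finset.prod_congr rfl h1, Finset.prod_div_distrib, Finset.prod_const,
    ← Nat.cast_prod, prodA4]
  norm_num

lemma Gamma_third_lb : (2.6729:ℝ) ≤ Real.Gamma (1/3) := by
  have hle := gammaSeq_le_Gamma (1/3) (by norm_num) (by norm_num) 100 (by norm_num)
  refine le_trans ?_ hle
  rw [Real.GammaSeq]
  have hcast : ((100:ℕ):ℝ) = (100:ℝ) := by norm_num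
  have hr : (4.6415:ℝ) ≤ (100:ℝ) ^ ((1:ℝ)/3) := by
    have h3 : (4.6415:ℝ) ^ (3:ℕ) ≤ 100 := by norm_num
    calc (4.6415:ℝ) = ((4.6415:ℝ) ^ (3:ℕ)) ^ ((1:ℝ)/3) := by
          rw [← Real.rpow_natCast (4.6415:ℝ) 3, ← Real.rpow_mul (by norm_num)]
          norm_num
      _ ≤ (100:ℝ) ^ ((1:ℝ)/3) := Real.rpow_le_rpow (by positivity) h3 (by norm_num)
  have hfact : ((Nat.factorial 100 : ℕ) : ℝ) = (93326215443944152681699238856266700490715968264381621468592963895217599993229915608941463976156518286253697920827223758251185210916864000000000000000000000000 : ℝ) := by rw [fact100]; norm_num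
  rw [show (100:ℕ)+1 = 101 from rfl, prod_third, hcast, hfact]
  have hA : (0:ℝ) < (250562875195690847489633288356592470242541053814057075797114553145734877680091554479312815921528836155924798302732241793371810022104427534261096812562086993446214813761423250062049280000000000000000000000000:ℝ) / 3^101 := by positivity
  rw [le_div_iff₀ hA]
  calc (2.6729:ℝ) * (250562875195690847489633288356592470242541053814057075797114553145734877680091554479312815921528836155924798302732241793371810022104427534261096812562086993446214813761423250062049280000000000000000000000000 / 3 ^ 101)
      ≤ (4.6415:ℝ) * 93326215443944152681699238856266700490715968264381621468592963895217599993229915608941463976156518286253697920827223758251185210916864000000000000000000000000 := by norm_num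
    _ ≤ (100:ℝ) ^ ((1:ℝ)/3) * 93326215443944152681699238856266700490715968264381621468592963895217599993229915608941463976156518286253697920827223758251185210916864000000000000000000000000 := by
        have : (0:ℝ) ≤ (93326215443944152681699238856266700490715968264381621468592963895217599993229915608941463976156518286253697920827223758251185210916864000000000000000000000000:ℝ) := by norm_num
        exact mul_le_mul_of_nonneg_right hr this

lemma Gamma_quarter_ub : Real.Gamma (1/4) ≤ (3.6292:ℝ) := by
  have hle := Gamma_le_gammaSeq (1/4) (by norm_num) (by norm_num) 100 (by norm_num)
  refine le_trans hle ?_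
  rw [Real.GammaSeq]
  have hcast : ((100:ℕ):ℝ) = (100:ℝ) := by norm_num
  have hfact : ((Nat.factorial 100 : ℕ) : ℝ) = (93326215443944152681699238856266700490715968264381621468592963895217599993229915608941463976156518286253697920827223758251185210916864000000000000000000000000 : ℝ) := by rw [fact100]; norm_num
  rw [show (100:ℕ)+1 = 101 from rfl, prod_quarter, hcast, hfact]
  have hmul : (100:ℝ) ^ ((1:ℝ)/4) * (((100:ℝ)+1)/100) ^ ((1:ℝ)/4) = (101:ℝ) ^ ((1:ℝ)/4) := by
    rw [← Real.mul_rpow (by norm_num) (by norm_num)]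
    norm_num
  have hr : (101:ℝ) ^ ((1:ℝ)/4) ≤ 3.17016 := by
    have h4 : (101:ℝ) ≤ (3.17016:ℝ) ^ (4:ℕ) := by norm_num
    calc (101:ℝ) ^ ((1:ℝ)/4) ≤ ((3.17016:ℝ)^(4:ℕ)) ^ ((1:ℝ)/4) :=
          Real.rpow_le_rpow (by norm_num) h4 (by norm_num)
      _ = 3.17016 := by
          rw [← Real.rpow_natCast (3.17016:ℝ) 4, ← Real.rpow_mul (by norm_num)]
          norm_num
  have hA : (0:ℝ) < (524032950851270190154042028854052437288528638239309802688602831806751415825199285771312450250337206638174310074899758879368556965719450506408514442666451783424884073283673891033571350657257742940130530893802642822265625:ℝ) / 4^101 := by positivity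
  calc (100:ℝ) ^ ((1:ℝ)/4) * 93326215443944152681699238856266700490715968264381621468592963895217599993229915608941463976156518286253697920827223758251185210916864000000000000000000000000 / (524032950851270190154042028854052437288528638239309802688602831806751415825199285771312450250337206638174310074899758879368556965719450506408514442666451783424884073283673891033571350657257742940130530893802642822265625 / 4 ^ 101) * (((100:ℝ)+1)/100) ^ ((1:ℝ)/4)
      = (100:ℝ) ^ ((1:ℝ)/4) * (((100:ℝ)+1)/100) ^ ((1:ℝ)/4) * (93326215443944152681699238856266700490715968264381621468592963895217599993229915608941463976156518286253697920827223758251185210916864000000000000000000000000 / (524032950851270190154042028854052437288528638239309802688602831806751415825199285771312450250337206638174310074899758879368556965719450506408514442666451783424884073283673891033571350657257742940130530893802642822265625 / 4 ^ 101)) := by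
        ring
    _ = (101:ℝ) ^ ((1:ℝ)/4) * (93326215443944152681699238856266700490715968264381621468592963895217599993229915608941463976156518286253697920827223758251185210916864000000000000000000000000 / (524032950851270190154042028854052437288528638239309802688602831806751415825199285771312450250337206638174310074899758879368556965719450506408514442666451783424884073283673891033571350657257742940130530893802642822265625 / 4 ^ 101)) := by rw [hmul]
    _ ≤ (3.17016:ℝ) * (93326215443944152681699238856266700490715968264381621468592963895217599993229915608941463976156518286253697920827223758251185210916864000000000000000000000000 / (524032950851270190154042028854052437288528638239309802688602831806751415825199285771312450250337206638174310074899758879368556965719450506408514442666451783424884073283673891033571350657257742940130530893802642822265625 / 4 ^ 101)) := by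
        have : (0:ℝ) ≤ (93326215443944152681699238856266700490715968264381621468592963895217599993229915608941463976156518286253697920827223758251185210916864000000000000000000000000:ℝ) / (524032950851270190154042028854052437288528638239309802688602831806751415825199285771312450250337206638174310074899758879368556965719450506408514442666451783424884073283673891033571350657257742940130530893802642822265625 / 4 ^ 101) := by positivity
        exact mul_le_mul_of_nonneg_right hr this
    _ ≤ 3.6292 := by norm_num

lemma Gamma_43_lb : (0.8909:ℝ) ≤ Real.Gamma (4/3) := by
  have h : (4/3:ℝ) = 1/3 + 1 := by norm_num
  rw [h, Real.Gamma_add_one (by norm_num)]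
  nlinarith [Gamma_third_lb]

lemma Gamma_54_ub : Real.Gamma (5/4) ≤ (0.9073:ℝ) := by
  have h : (5/4:ℝ) = 1/4 + 1 := by norm_num
  rw [h, Real.Gamma_add_one (by norm_num)]
  nlinarith [Gamma_quarter_ub]

lemma Gamma_54_pos : 0 < Real.Gamma (5/4) := Real.Gamma_pos_of_pos (by norm_num)

lemma convex_bound {s : ℝ} (hs : 0 < s) (hs4 : 4 * s < 1) :
    Real.Gamma (1 + s) ≤ Real.Gamma (5/4) ^ (4*s) := by
  have h := Real.Gamma_mul_add_mul_le_rpow_Gamma_mul_rpow_Gamma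
    (s := 1) (t := 5/4) (a := 1 - 4*s) (b := 4*s)
    (by norm_num) (by norm_num) (by linarith) (by linarith) (by ring)
  have he : (1 - 4*s) * 1 + 4*s * (5/4) = 1 + s := by ring
  rw [he, Real.Gamma_one, Real.one_rpow, one_mul] at h
  exact h

lemma ind_bound : ∀ n : ℕ, 5 ≤ n → (n:ℝ) * (0.9073:ℝ)^(4:ℕ) ≤ (1.2836:ℝ)^n := by
  intro n hn
  induction n, hn using Nat.le_induction with
  | base => norm_num
  | succ n hn ih =>
      have hn5 : (5:ℝ) ≤ (n:ℝ) := by exact_mod_cast hn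
      have : (1.2836:ℝ)^(n+1) = 1.2836 * 1.2836^n := by ring
      rw [this]
      push_cast
      nlinarith

lemma rhs_lb : (1.2836:ℝ) ≤ Real.Gamma (4/3) * (3:ℝ) ^ ((1:ℝ)/3) := by
  have h3 : (1.4422:ℝ) ≤ (3:ℝ) ^ ((1:ℝ)/3) := by
    have h : (1.4422:ℝ)^(3:ℕ) ≤ 3 := by norm_num
    calc (1.4422:ℝ) = ((1.4422:ℝ)^(3:ℕ)) ^ ((1:ℝ)/3) := by
          rw [← Real.rpow_natCast (1.4422:ℝ) 3, ← Real.rpow_mul (by norm_num)]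
          norm_num
      _ ≤ (3:ℝ) ^ ((1:ℝ)/3) := Real.rpow_le_rpow (by positivity) h (by norm_num)
  calc (1.2836:ℝ) ≤ 0.8909 * 1.4422 := by norm_num
    _ ≤ Real.Gamma (4/3) * (3:ℝ) ^ ((1:ℝ)/3) := by
        have := Gamma_43_lb
        have h0 : (0:ℝ) ≤ 0.8909 := by norm_num
        exact mul_le_mul this h3 (by norm_num) (Real.Gamma_pos_of_pos (by norm_num)).le

lemma sqrt2_ub : (2:ℝ) ^ ((1:ℝ)/2) ≤ 1.41422 := by
  have h : (2:ℝ) ≤ (1.41422:ℝ)^(2:ℕ) := by norm_num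
  calc (2:ℝ) ^ ((1:ℝ)/2) ≤ ((1.41422:ℝ)^(2:ℕ)) ^ ((1:ℝ)/2) :=
        Real.rpow_le_rpow (by norm_num) h (by norm_num)
    _ = 1.41422 := by
        rw [← Real.rpow_natCast (1.41422:ℝ) 2, ← Real.rpow_mul (by norm_num)]
        norm_num

lemma qr4_ub : (4:ℝ) ^ ((1:ℝ)/4) ≤ 1.41422 := by
  have h : (4:ℝ) ≤ (1.41422:ℝ)^(4:ℕ) := by norm_num
  calc (4:ℝ) ^ ((1:ℝ)/4) ≤ ((1.41422:ℝ)^(4:ℕ)) ^ ((1:ℝ)/4) :=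
        Real.rpow_le_rpow (by norm_num) h (by norm_num)
    _ = 1.41422 := by
        rw [← Real.rpow_natCast (1.41422:ℝ) 4, ← Real.rpow_mul (by norm_num)]
        norm_num

/-- The function `k ↦ Γ(1 + 1/(k+1)) (k+1)^{1/(k+1)}` on the positive
integers attains its maximum at `k = 2`: for all integers `k ≥ 1`,
`Γ(1 + 1/(k+1)) (k+1)^{1/(k+1)} ≤ Γ(4/3) · 3^{1/3}`. -/
theorem stmt9 (k : ℕ) (hk : 1 ≤ k) :
    Real.Gamma (1 + 1 / (k + 1)) * ((k : ℝ) + 1) ^ ((1 : ℝ) / (k + 1))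
      ≤ Real.Gamma (4 / 3) * (3 : ℝ) ^ ((1 : ℝ) / 3) := by
  obtain rfl | rfl | rfl | hk4 : k = 1 ∨ k = 2 ∨ k = 3 ∨ 4 ≤ k := by omega
  · -- k = 1
    have h1 : (1:ℝ) + 1 / ((1:ℕ) + 1) = 1/2 + 1 := by norm_num
    rw [h1, Real.Gamma_add_one (by norm_num), Real.Gamma_one_half_eq]
    have hpi : Real.sqrt π ≤ 1.7725 := by
      rw [show (1.7725:ℝ) = Real.sqrt (1.7725^2) by rw [Real.sqrt_sq (by norm_num)]]
      exact Real.sqrt_le_sqrt (by nlinarith [Real.pi_lt_d6])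
    have hs2 : ((1:ℕ):ℝ) + 1 = 2 := by norm_num
    rw [hs2]
    calc 1/2 * Real.sqrt π * (2:ℝ) ^ ((1:ℝ)/2)
        ≤ 1/2 * 1.7725 * 1.41422 := by
          have h1 : (0:ℝ) ≤ Real.sqrt π := Real.sqrt_nonneg _
          have h2 : (0:ℝ) ≤ (2:ℝ) ^ ((1:ℝ)/2) := by positivity
          nlinarith [sqrt2_ub]
      _ ≤ 1.2836 := by norm_num
      _ ≤ _ := rhs_lb
  · -- k = 2
    norm_num
  · -- k = 3
    have h1 : (1:ℝ) + 1 / ((3:ℕ) + 1) = 5/4 := by norm_num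
    have hs2 : ((3:ℕ):ℝ) + 1 = 4 := by norm_num
    rw [h1, hs2]
    calc Real.Gamma (5/4) * (4:ℝ) ^ ((1:ℝ)/4)
        ≤ 0.9073 * 1.41422 := by
          have h2 : (0:ℝ) ≤ (4:ℝ) ^ ((1:ℝ)/4) := by positivity
          nlinarith [qr4_ub, Gamma_54_ub, Gamma_54_pos]
      _ ≤ 1.2836 := by norm_num
      _ ≤ _ := rhs_lb
  · -- k ≥ 4
    set s : ℝ := 1 / ((k:ℝ) + 1) with hs_def
    have hk5 : (5:ℝ) ≤ (k:ℝ) + 1 := by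
      have : (4:ℝ) ≤ (k:ℝ) := by exact_mod_cast hk4
      linarith
    have hs0 : 0 < s := by positivity
    have hs4 : 4 * s < 1 := by
      rw [hs_def]
      rw [mul_one_div, div_lt_one (by linarith)]
      linarith
    have hc := convex_bound hs0 hs4
    have hrb : Real.Gamma (5/4) ^ (4*s) ≤ (0.9073:ℝ) ^ (4*s) :=
      Real.rpow_le_rpow Gamma_54_pos.le Gamma_54_ub (by positivity)
    have key : (0.9073:ℝ) ^ (4*s) * ((k:ℝ) + 1) ^ s ≤ 1.2836 := by
      have e1 : (0.9073:ℝ) ^ (4*s) = ((0.9073:ℝ) ^ (4:ℕ)) ^ s := by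
        rw [← Real.rpow_natCast (0.9073:ℝ) 4, ← Real.rpow_mul (by norm_num)]
        norm_num
      have e2 : ((0.9073:ℝ) ^ (4:ℕ)) ^ s * ((k:ℝ) + 1) ^ s
          = ((0.9073:ℝ) ^ (4:ℕ) * ((k:ℝ) + 1)) ^ s :=
        (Real.mul_rpow (by positivity) (by positivity)).symm
      rw [e1, e2]
      have hub : (0.9073:ℝ) ^ (4:ℕ) * ((k:ℝ) + 1) ≤ (1.2836:ℝ) ^ (k+1 : ℕ) := by
        have := ind_bound (k+1) (by omega)
        push_cast at this ⊢
        linarith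
      calc ((0.9073:ℝ) ^ (4:ℕ) * ((k:ℝ) + 1)) ^ s
          ≤ ((1.2836:ℝ) ^ (k+1 : ℕ)) ^ s :=
            Real.rpow_le_rpow (by positivity) hub hs0.le
        _ = 1.2836 := by
            rw [← Real.rpow_natCast (1.2836:ℝ) (k+1), ← Real.rpow_mul (by norm_num)]
            rw [hs_def]
            push_cast
            rw [mul_one_div, div_self (by linarith), Real.rpow_one]
    calc Real.Gamma (1 + 1/((k:ℝ)+1)) * ((k:ℝ) + 1) ^ ((1:ℝ)/((k:ℝ)+1))
        ≤ (0.9073:ℝ) ^ (4*s) * ((k:ℝ) + 1) ^ s := by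
          have hG : Real.Gamma (1 + s) ≤ (0.9073:ℝ) ^ (4*s) := hc.trans hrb
          have hpow : (0:ℝ) ≤ ((k:ℝ) + 1) ^ s := by positivity
          have := mul_le_mul_of_nonneg_right hG hpow
          exact this
      _ ≤ 1.2836 := key
      _ ≤ _ := rhs_lb
end

section
/- Fix an integer k ≥ 1 and let m_n = ⌊(n−2)/(k+1)⌋. Then limsup_{n→∞} n^{1/(k+1)} ∫₀¹ (1 − (1−p)^{k+1})^{m_n} dp ≤ Γ(1 + 1/(k+1)) · (k+1)^{1/(k+1)} ≤ Γ(4/3) · 3^{1/3}. -/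
open Filter MeasureTheory Set Topology Real Finset

lemma Gamma_interp (a b t : ℝ) (ha : 0 < a) (hb : 0 < b) (ht0 : 0 ≤ t) (ht1 : t ≤ 1) :
    Real.Gamma ((1 - t) * a + t * b) ≤ Real.Gamma a ^ (1 - t) * Real.Gamma b ^ t := by
  have harg : 0 < (1 - t) * a + t * b := by
    rcases eq_or_lt_of_le ht1 with rfl | h
    · simpa using hb
    · have : 0 < (1 - t) * a := mul_pos (by linarith) ha
      nlinarith [mul_nonneg ht0 hb.le]
  have h := Real.convexOn_log_Gamma.2 (Set.mem_Ioi.mpr ha) (Set.mem_Ioi.mpr hb)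
      (by linarith : (0:ℝ) ≤ 1 - t) ht0 (by ring)
  simp only [Function.comp_apply, smul_eq_mul] at h
  have hGa := Real.Gamma_pos_of_pos ha
  have hGb := Real.Gamma_pos_of_pos hb
  have hGarg := Real.Gamma_pos_of_pos harg
  calc Real.Gamma ((1 - t) * a + t * b)
      = Real.exp (Real.log (Real.Gamma ((1 - t) * a + t * b))) := (Real.exp_log hGarg).symm
    _ ≤ Real.exp ((1 - t) * Real.log (Real.Gamma a) + t * Real.log (Real.Gamma b)) :=
        Real.exp_le_exp.mpr h
    _ = Real.Gamma a ^ (1 - t) * Real.Gamma b ^ t := by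
        rw [Real.exp_add, Real.rpow_def_of_pos hGa, Real.rpow_def_of_pos hGb,
          mul_comm (Real.log _), mul_comm (Real.log _)]

lemma Gamma_upper (n : ℕ) {z : ℝ} (h0 : 0 ≤ z) (h1 : z ≤ 1) :
    Real.Gamma ((n : ℝ) + 1 + z) ≤ (n.factorial : ℝ) * ((n : ℝ) + 1) ^ z := by
  have h := Gamma_interp ((n:ℝ)+1) ((n:ℝ)+2) z
    (by positivity) (by positivity) h0 h1
  have e1 : (1 - z) * ((n:ℝ)+1) + z * ((n:ℝ)+2) = (n:ℝ) + 1 + z := by ring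
  rw [e1] at h
  have e2 : Real.Gamma ((n:ℝ)+1) = (n.factorial : ℝ) := Real.Gamma_nat_eq_factorial n
  have e3 : Real.Gamma ((n:ℝ)+2) = ((n+1).factorial : ℝ) := by
    have := Real.Gamma_nat_eq_factorial (n+1)
    rw [← this]; norm_num; ring_nf
  rw [e2, e3] at h
  refine h.trans_eq ?_
  have hf : (0:ℝ) < (n.factorial : ℝ) := by positivity
  rw [Nat.factorial_succ]
  push_cast
  rw [Real.mul_rpow (by positivity) (by positivity), ← mul_assoc,
    mul_right_comm, ← Real.rpow_add hf, sub_add_cancel, Real.rpow_one]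

lemma Gamma_lower (n : ℕ) {z : ℝ} (hz : 0 < z) (h1 : z ≤ 1) :
    (n.factorial : ℝ) * ((n : ℝ) + z) ^ z ≤ Real.Gamma ((n : ℝ) + 1 + z) := by
  have hnz : (0:ℝ) < (n:ℝ) + z := by positivity
  have h := Gamma_interp ((n:ℝ)+z) ((n:ℝ)+1+z) (1-z)
    hnz (by positivity) (by linarith) (by linarith)
  have e1 : (1 - (1-z)) * ((n:ℝ)+z) + (1-z) * ((n:ℝ)+1+z) = (n:ℝ) + 1 := by ring
  rw [e1, Real.Gamma_nat_eq_factorial n] at h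
  have e4 : (1:ℝ) - (1-z) = z := by ring
  rw [e4] at h
  have hrec : Real.Gamma ((n:ℝ)+1+z) = ((n:ℝ)+z) * Real.Gamma ((n:ℝ)+z) := by
    have := Real.Gamma_add_one (show ((n:ℝ)+z) ≠ 0 by positivity)
    rw [← this]; ring_nf
  have hG := Real.Gamma_pos_of_pos hnz
  have hG2 := Real.Gamma_pos_of_pos (show (0:ℝ) < (n:ℝ)+1+z by positivity)
  have hgz : Real.Gamma ((n:ℝ)+z) = Real.Gamma ((n:ℝ)+1+z) / ((n:ℝ)+z) := by
    rw [hrec]; field_simp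
  rw [hgz, Real.div_rpow hG2.le hnz.le, div_mul_eq_mul_div, ← Real.rpow_add hG2,
    show z + (1-z) = (1:ℝ) from by ring, Real.rpow_one] at h
  exact (le_div_iff₀ (by positivity)).mp h

lemma Gamma_prod {z : ℝ} (hz : 0 < z) (N : ℕ) :
    Real.Gamma (z + N) = Real.Gamma z * ∏ j ∈ Finset.range N, (z + j) := by
  induction N with
  | zero => simp
  | succ n ih =>
    have h1 : z + (n+1 : ℕ) = (z + n) + 1 := by push_cast; ring
    rw [h1, Real.Gamma_add_one (show z + (n:ℝ) ≠ 0 by positivity), ih,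
      Finset.prod_range_succ]
    ring

lemma prod_eval (a N : ℕ) (ha : 0 < a) :
    ∏ j ∈ Finset.range N, ((1:ℝ)/a + j) = ((∏ j ∈ Finset.range N, (a*j+1) : ℕ) : ℝ) / a^N := by
  induction N with
  | zero => simp
  | succ n ih =>
    rw [Finset.prod_range_succ, Finset.prod_range_succ, ih]
    have : (0:ℝ) < (a:ℝ) := by exact_mod_cast ha
    push_cast
    field_simp
    ring

lemma Gamma_num_lb (a n : ℕ) (ha : 1 ≤ a) :
    (n.factorial : ℝ) * (((n:ℝ) + 1/a) ^ ((1:ℝ)/a)) * a^(n+1)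
      / ((∏ j ∈ Finset.range (n+1), (a*j+1) : ℕ) : ℝ) ≤ Real.Gamma (1/(a:ℝ)) := by
  have haR : (0:ℝ) < (a:ℝ) := by exact_mod_cast ha
  have hz : (0:ℝ) < 1/(a:ℝ) := by positivity
  have hz1 : (1:ℝ)/(a:ℝ) ≤ 1 := by
    rw [div_le_one haR]; exact_mod_cast ha
  have hPpos : (0:ℝ) < ((∏ j ∈ Finset.range (n+1), (a*j+1) : ℕ) : ℝ) := by
    have : 0 < ∏ j ∈ Finset.range (n+1), (a*j+1) := Finset.prod_pos fun j _ => by omega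
    exact_mod_cast this
  have hlow := Gamma_lower n hz hz1
  have harg : (n:ℝ) + 1 + 1/a = 1/(a:ℝ) + ((n+1 : ℕ):ℝ) := by push_cast; ring
  rw [harg, Gamma_prod hz (n+1), prod_eval a (n+1) ha] at hlow
  rw [div_le_iff₀ hPpos]
  calc (n.factorial : ℝ) * (((n:ℝ) + 1/a) ^ ((1:ℝ)/a)) * (a:ℝ)^(n+1)
      ≤ Real.Gamma (1/(a:ℝ)) * (((∏ j ∈ Finset.range (n+1), (a*j+1) : ℕ) : ℝ) / (a:ℝ)^(n+1)) * (a:ℝ)^(n+1) := by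
        apply mul_le_mul_of_nonneg_right _ (by positivity)
        exact hlow
    _ = Real.Gamma (1/(a:ℝ)) * ((∏ j ∈ Finset.range (n+1), (a*j+1) : ℕ) : ℝ) := by
        field_simp

lemma Gamma_num_ub (a n : ℕ) (ha : 1 ≤ a) :
    Real.Gamma (1/(a:ℝ)) ≤ (n.factorial : ℝ) * (((n:ℝ) + 1) ^ ((1:ℝ)/a)) * a^(n+1)
      / ((∏ j ∈ Finset.range (n+1), (a*j+1) : ℕ) : ℝ) := by
  have haR : (0:ℝ) < (a:ℝ) := by exact_mod_cast ha
  have hz : (0:ℝ) < 1/(a:ℝ) := by positivity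
  have hz1 : (1:ℝ)/(a:ℝ) ≤ 1 := by
    rw [div_le_one haR]; exact_mod_cast ha
  have hPpos : (0:ℝ) < ((∏ j ∈ Finset.range (n+1), (a*j+1) : ℕ) : ℝ) := by
    have : 0 < ∏ j ∈ Finset.range (n+1), (a*j+1) := Finset.prod_pos fun j _ => by omega
    exact_mod_cast this
  have hup := Gamma_upper n hz.le hz1
  have harg : (n:ℝ) + 1 + 1/a = 1/(a:ℝ) + ((n+1 : ℕ):ℝ) := by push_cast; ring
  rw [harg, Gamma_prod hz (n+1), prod_eval a (n+1) ha] at hup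
  rw [le_div_iff₀ hPpos]
  calc Real.Gamma (1/(a:ℝ)) * ((∏ j ∈ Finset.range (n+1), (a*j+1) : ℕ) : ℝ)
      = Real.Gamma (1/(a:ℝ)) * (((∏ j ∈ Finset.range (n+1), (a*j+1) : ℕ) : ℝ) / (a:ℝ)^(n+1)) * (a:ℝ)^(n+1) := by
        field_simp
    _ ≤ (n.factorial : ℝ) * (((n:ℝ) + 1) ^ ((1:ℝ)/a)) * (a:ℝ)^(n+1) := by
        apply mul_le_mul_of_nonneg_right _ (by positivity)
        exact hup

lemma nat_ind : ∀ K : ℕ, 6 ≤ K → K^3 * 25^(3*K-9) ≤ 3^K * 22^(3*K-9) := by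
  intro K hK
  induction K, hK using Nat.le_induction with
  | base => norm_num
  | succ K hK ih =>
    have e1 : 3*(K+1)-9 = (3*K-9)+3 := by omega
    rw [e1, pow_add, pow_succ 3 K]
    have h0 : 6*(K+1) ≤ 7*K := by omega
    have h1 : (6*(K+1))^3 ≤ (7*K)^3 := Nat.pow_le_pow_left h0 3
    have h2 : 216*(K+1)^3 ≤ 343*K^3 := by
      calc 216*(K+1)^3 = (6*(K+1))^3 := by ring
        _ ≤ (7*K)^3 := h1
        _ = 343*K^3 := by ring
    refine Nat.le_of_mul_le_mul_left ?_ (show 0 < 216 by norm_num)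
    calc 216 * ((K+1)^3 * (25^(3*K-9) * 25^3))
        = (216*(K+1)^3) * 25^(3*K-9) * 15625 := by ring
      _ ≤ (343*K^3) * 25^(3*K-9) * 15625 :=
          Nat.mul_le_mul_right _ (Nat.mul_le_mul_right _ h2)
      _ = (K^3 * 25^(3*K-9)) * 5359375 := by ring
      _ ≤ (3^K * 22^(3*K-9)) * 5359375 := Nat.mul_le_mul_right _ ih
      _ ≤ (3^K * 22^(3*K-9)) * 6899904 := Nat.mul_le_mul_left _ (by norm_num)
      _ = 216 * (3^K * 3 * 22^(3*K-9+3)) := by rw [pow_add]; ring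

set_option maxRecDepth 1000000
lemma G43_lb : (8915/10000 : ℝ) ≤ Real.Gamma (4/3) := by
  have h13 := Gamma_num_lb 3 160 (by norm_num)
  norm_num at h13
  have hroot : (54323/10000 : ℝ) ≤ ((481:ℝ)/3) ^ ((1:ℝ)/3) := by
    have h1 : ((54323:ℝ)/10000) = (((54323:ℝ)/10000) ^ (3:ℕ)) ^ ((1:ℝ)/3) := by
      rw [← Real.rpow_natCast (((54323:ℝ)/10000)) 3, ← Real.rpow_mul (by positivity)]
      norm_num
    rw [h1]
    exact Real.rpow_le_rpow (by positivity) (by norm_num) (by norm_num)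
  have h43 : Real.Gamma (4/3) = (1/3) * Real.Gamma (1/3) := by
    rw [show (4/3:ℝ) = 1/3 + 1 by norm_num, Real.Gamma_add_one (by norm_num)]
  rw [h43]
  have h3 : (26745/10000 : ℝ) ≤ Real.Gamma (1/3) := by
    refine le_trans ?_ h13
    rw [le_div_iff₀ (by norm_num)]
    calc (26745/10000 : ℝ) * 62708195472507124337772061672555755544567082807901163288848506362616953135541570546022752024979707578407200282570413529840829661253329624446817989975479425573375829704648018234252041732110291140517990050251997248646533179302934753984696448223208709383929345877921292530054448304617116015707615125476399202815807896095293440000000000000000000000000000000000000000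
        ≤ (Nat.factorial 160 : ℝ) * (54323/10000) * 65542350158517637872691969508970705427701150314738255642438471845988797065603 := by
          norm_num [Nat.factorial]
      _ ≤ (Nat.factorial 160 : ℝ) * (((481:ℝ)/3) ^ ((1:ℝ)/3)) * 65542350158517637872691969508970705427701150314738255642438471845988797065603 := by
          gcongr
  linarith

lemma rpow_upper {x s : ℝ} (n : ℕ) (hn : 0 < n) (hs : 0 ≤ s) (hx : 0 ≤ x) (h : x ≤ s ^ n)
    (he : (n:ℝ) * ((1:ℝ)/n) = 1) : x ^ ((1:ℝ)/n) ≤ s := by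
  calc x ^ ((1:ℝ)/n) ≤ (s ^ n) ^ ((1:ℝ)/n) :=
        Real.rpow_le_rpow hx h (by positivity)
    _ = s := by
        rw [← Real.rpow_natCast s n, ← Real.rpow_mul hs, he, Real.rpow_one]

lemma G54_ub : Real.Gamma (5/4) ≤ (908/1000 : ℝ) := by
  have h14 := Gamma_num_ub 4 128 (by norm_num)
  norm_num at h14
  have hroot : ((129:ℝ)) ^ ((1:ℝ)/4) ≤ 33714/10000 :=
    rpow_upper 4 (by norm_num) (by norm_num) (by norm_num) (by norm_num) (by norm_num)
  have h54 : Real.Gamma (5/4) = (1/4) * Real.Gamma (1/4) := by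
    rw [show (5/4:ℝ) = 1/4 + 1 by norm_num, Real.Gamma_add_one (by norm_num)]
  rw [h54]
  have h3 : Real.Gamma (1/4) ≤ 4 * (908/1000 : ℝ) := by
    refine le_trans h14 ?_
    rw [div_le_iff₀ (by norm_num)]
    calc (Nat.factorial 128 : ℝ) * ((129:ℝ) ^ ((1:ℝ)/4)) * 463168356949264781694283940034751631413079938662562256157830336031652518559744
        ≤ (Nat.factorial 128 : ℝ) * (33714/10000) * 463168356949264781694283940034751631413079938662562256157830336031652518559744 := by
          gcongr
      _ ≤ 4 * (908/1000 : ℝ) * 165901190722035324428644161928414987402304374093981224459216120738890680227031560186811453933331341862521544436895772971129235656260379220400468652134336604142664744493557264003667905850119573892110141037817614482109503462751664281904736797032414219179298270363432880279445089399814605712890625 := by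
          norm_num [Nat.factorial]
  linarith

lemma G65_ub : Real.Gamma (6/5) ≤ (9285/10000 : ℝ) := by
  have h15 := Gamma_num_ub 5 30 (by norm_num)
  norm_num at h15
  have hroot : ((31:ℝ)) ^ ((1:ℝ)/5) ≤ 19874/10000 :=
    rpow_upper 5 (by norm_num) (by norm_num) (by norm_num) (by norm_num) (by norm_num)
  have h65 : Real.Gamma (6/5) = (1/5) * Real.Gamma (1/5) := by
    rw [show (6/5:ℝ) = 1/5 + 1 by norm_num, Real.Gamma_add_one (by norm_num)]
  rw [h65]
  have h3 : Real.Gamma (1/5) ≤ 5 * (9285/10000 : ℝ) := by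
    refine le_trans h15 ?_
    rw [div_le_iff₀ (by norm_num)]
    calc (Nat.factorial 30 : ℝ) * ((31:ℝ) ^ ((1:ℝ)/5)) * 4656612873077392578125
        ≤ (Nat.factorial 30 : ℝ) * (19874/10000) * 4656612873077392578125 := by
          gcongr
      _ ≤ 5 * (9285/10000 : ℝ) * 533317330131325520133217232240816252296973939770392576 := by
          norm_num [Nat.factorial]
  linarith

lemma rpow_lower {x s : ℝ} (n : ℕ) (hs : 0 ≤ s) (h : s ^ n ≤ x)
    (he : (n:ℝ) * ((1:ℝ)/n) = 1) : s ≤ x ^ ((1:ℝ)/n) := by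
  calc s = (s ^ n) ^ ((1:ℝ)/n) := by
        rw [← Real.rpow_natCast s n, ← Real.rpow_mul hs, he, Real.rpow_one]
    _ ≤ x ^ ((1:ℝ)/n) := Real.rpow_le_rpow (by positivity) h (by positivity)

lemma r3_lb : (14422/10000 : ℝ) ≤ (3:ℝ) ^ ((1:ℝ)/3) :=
  rpow_lower 3 (by norm_num) (by norm_num) (by norm_num)

lemma RHS_lb : (8915/10000 : ℝ) * (14422/10000) ≤ Real.Gamma (4/3) * (3:ℝ) ^ ((1:ℝ)/3) :=
  mul_le_mul G43_lb r3_lb (by norm_num) (Real.Gamma_nonneg_of_nonneg (by norm_num))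

lemma part2 (K : ℕ) (hK : 2 ≤ K) :
    Real.Gamma (1 + 1/(K:ℝ)) * (K:ℝ) ^ ((1:ℝ)/(K:ℝ)) ≤
      Real.Gamma (4/3) * (3:ℝ) ^ ((1:ℝ)/3) := by
  rcases lt_or_ge K 6 with h6 | h6
  · interval_cases K
    · -- K = 2
      push_cast
      have hG : Real.Gamma (1 + 1/(2:ℝ)) = Real.sqrt Real.pi / 2 := by
        rw [show (1:ℝ) + 1/2 = 1/2 + 1 by norm_num,
          Real.Gamma_add_one (by norm_num), Real.Gamma_one_half_eq]
        ring
      rw [hG]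
      refine le_trans ?_ RHS_lb
      have h2 : (2:ℝ) ^ ((1:ℝ)/(2:ℝ)) ≤ 14143/10000 :=
        rpow_upper 2 (by norm_num) (by norm_num) (by norm_num) (by norm_num) (by norm_num)
      have hsq : Real.sqrt Real.pi ≤ 17725/10000 := by
        rw [show (17725:ℝ)/10000 = Real.sqrt ((17725/10000)^2) by
          rw [Real.sqrt_sq (by norm_num)]]
        apply Real.sqrt_le_sqrt
        nlinarith [Real.pi_lt_d6]
      calc Real.sqrt Real.pi / 2 * (2:ℝ) ^ ((1:ℝ)/(2:ℝ))
          ≤ (17725/10000) / 2 * (14143/10000) := by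
            apply mul_le_mul (by linarith) h2 (by positivity) (by norm_num)
        _ ≤ (8915/10000 : ℝ) * (14422/10000) := by norm_num
    · -- K = 3
      push_cast
      rw [show (1:ℝ) + 1/(3:ℝ) = 4/3 by norm_num]
    · -- K = 4
      refine le_trans ?_ RHS_lb
      push_cast
      rw [show (1:ℝ) + 1/(4:ℝ) = 5/4 by norm_num]
      have h2 : (4:ℝ) ^ ((1:ℝ)/(4:ℝ)) ≤ 14143/10000 :=
        rpow_upper 4 (by norm_num) (by norm_num) (by norm_num) (by norm_num) (by norm_num)
      calc Real.Gamma (5/4) * (4:ℝ) ^ ((1:ℝ)/(4:ℝ))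
          ≤ (908/1000) * (14143/10000) := by
            apply mul_le_mul G54_ub h2 (by positivity)
              (by norm_num)
        _ ≤ (8915/10000 : ℝ) * (14422/10000) := by norm_num
    · -- K = 5
      refine le_trans ?_ RHS_lb
      push_cast
      rw [show (1:ℝ) + 1/(5:ℝ) = 6/5 by norm_num]
      have h2 : (5:ℝ) ^ ((1:ℝ)/(5:ℝ)) ≤ 13798/10000 :=
        rpow_upper 5 (by norm_num) (by norm_num) (by norm_num) (by norm_num) (by norm_num)
      calc Real.Gamma (6/5) * (5:ℝ) ^ ((1:ℝ)/(5:ℝ))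
          ≤ (9285/10000) * (13798/10000) := by
            apply mul_le_mul G65_ub h2 (by positivity) (by norm_num)
        _ ≤ (8915/10000 : ℝ) * (14422/10000) := by norm_num
  · -- K ≥ 6
    have hKR : (0:ℝ) < (K:ℝ) := by
      have : 0 < K := by omega
      exact_mod_cast this
    have hGpos : (0:ℝ) < Real.Gamma (4/3) := Real.Gamma_pos_of_pos (by norm_num)
    -- step 1 : Gamma (1+1/K) ≤ Gamma(4/3) ^ (3/K)
    have hstep1 : Real.Gamma (1 + 1/(K:ℝ)) ≤ Real.Gamma (4/3) ^ ((3:ℝ)/(K:ℝ)) := by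
      have ht1 : (3:ℝ)/(K:ℝ) ≤ 1 := by
        rw [div_le_one hKR]
        have : (6:ℝ) ≤ (K:ℝ) := by exact_mod_cast h6
        linarith
      have h := Gamma_interp 1 (4/3) (3/(K:ℝ)) one_pos (by norm_num) (by positivity) ht1
      have e : (1 - 3/(K:ℝ)) * 1 + 3/(K:ℝ) * (4/3) = 1 + 1/(K:ℝ) := by
        field_simp; ring
      rw [e, Real.Gamma_one, Real.one_rpow, one_mul] at h
      exact h
    have hK11 : (0:ℝ) ≤ (K:ℝ) ^ ((1:ℝ)/(K:ℝ)) := by positivity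
    refine le_trans (mul_le_mul_of_nonneg_right hstep1 hK11) ?_
    -- step 2 : pow comparison
    have h3K : 3*K ≠ 0 := by omega
    refine le_of_pow_le_pow_left₀ h3K (by positivity) ?_
    have hXpow : (Real.Gamma (4/3) ^ ((3:ℝ)/(K:ℝ)) * (K:ℝ) ^ ((1:ℝ)/(K:ℝ))) ^ (3*K)
        = Real.Gamma (4/3) ^ (9:ℕ) * (K:ℝ) ^ (3:ℕ) := by
      rw [mul_pow, ← Real.rpow_natCast (Real.Gamma (4/3) ^ ((3:ℝ)/(K:ℝ))) (3*K),
        ← Real.rpow_natCast ((K:ℝ) ^ ((1:ℝ)/(K:ℝ))) (3*K),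
        ← Real.rpow_mul hGpos.le, ← Real.rpow_mul hKR.le]
      push_cast
      rw [show (3:ℝ)/(K:ℝ) * (3*(K:ℝ)) = ((9:ℕ):ℝ) by push_cast; field_simp; ring,
        show (1:ℝ)/(K:ℝ) * (3*(K:ℝ)) = ((3:ℕ):ℝ) by push_cast; field_simp,
        Real.rpow_natCast, Real.rpow_natCast]
    have hYpow : (Real.Gamma (4/3) * (3:ℝ) ^ ((1:ℝ)/3)) ^ (3*K)
        = Real.Gamma (4/3) ^ (3*K) * (3:ℝ) ^ (K:ℕ) := by
      rw [mul_pow, ← Real.rpow_natCast ((3:ℝ) ^ ((1:ℝ)/3)) (3*K),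
        ← Real.rpow_mul (by norm_num : (0:ℝ) ≤ 3)]
      push_cast
      rw [show (1:ℝ)/3 * (3*(K:ℝ)) = (K:ℝ) by field_simp, Real.rpow_natCast]
    rw [hXpow, hYpow]
    have hsplit : Real.Gamma (4/3) ^ (3*K) = Real.Gamma (4/3) ^ (9:ℕ) * Real.Gamma (4/3) ^ (3*K-9) := by
      rw [← pow_add]
      congr 1
      omega
    rw [hsplit, mul_assoc]
    apply mul_le_mul_of_nonneg_left _ (by positivity)
    -- (K)^3 ≤ Gamma(4/3)^(3K-9) * 3^K
    have hg : ((22:ℝ)/25) ^ (3*K-9) ≤ Real.Gamma (4/3) ^ (3*K-9) := by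
      apply pow_le_pow_left₀ (by norm_num)
      linarith [G43_lb]
    have hnat : ((K:ℝ))^(3:ℕ) * 25^(3*K-9) ≤ 3^K * 22^(3*K-9) := by
      exact_mod_cast nat_ind K h6
    calc ((K:ℝ))^(3:ℕ) ≤ (3:ℝ)^K * ((22:ℝ)/25) ^ (3*K-9) := by
          rw [div_pow, ← mul_div_assoc, le_div_iff₀ (by positivity)]
          exact hnat
      _ = ((22:ℝ)/25) ^ (3*K-9) * 3^K := by ring
      _ ≤ Real.Gamma (4/3) ^ (3*K-9) * 3^K :=
          mul_le_mul_of_nonneg_right hg (by positivity)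


-- integral bound for a single n
lemma int_bound (k m : ℕ) (hm : 1 ≤ m) :
    (∫ p in (0:ℝ)..1, (1 - (1 - p) ^ (k + 1)) ^ m)
      ≤ (m:ℝ) ^ (-1/((k:ℝ)+1)) * Real.Gamma (1/((k:ℝ)+1) + 1) := by
  have hKR : (0:ℝ) < (k:ℝ)+1 := by positivity
  have hmR : (0:ℝ) < (m:ℝ) := by exact_mod_cast hm
  have hA : (∫ p in (0:ℝ)..1, (1 - (1 - p) ^ (k + 1)) ^ m)
      = ∫ q in (0:ℝ)..1, (1 - q ^ (k + 1)) ^ m := by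
    have := intervalIntegral.integral_comp_sub_left (a := (0:ℝ)) (b := (1:ℝ))
      (fun q => (1 - q ^ (k + 1)) ^ m) 1
    norm_num at this
    exact this
  rw [hA, intervalIntegral.integral_of_le zero_le_one]
  have hconv : ∀ q ∈ Set.Ioc (0:ℝ) 1,
      (1 - q ^ (k + 1)) ^ m ≤ Real.exp (-(m:ℝ) * q ^ ((k:ℝ)+1)) := by
    intro q hq
    have hq0 : 0 < q := hq.1
    have hq1 : q ≤ 1 := hq.2
    have hpow : q ^ (k+1) ≤ 1 := pow_le_one₀ hq0.le hq1
    have hpow0 : 0 ≤ q ^ (k+1) := by positivity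
    have h1 : (0:ℝ) ≤ 1 - q ^ (k+1) := by linarith
    have h2 : 1 - q ^ (k+1) ≤ Real.exp (-(q ^ (k+1))) := by
      have := Real.add_one_le_exp (-(q ^ (k+1)))
      linarith
    have h3 : (1 - q ^ (k+1)) ^ m ≤ (Real.exp (-(q ^ (k+1)))) ^ m :=
      pow_le_pow_left₀ h1 h2 m
    have h4 : (Real.exp (-(q ^ (k+1)))) ^ m = Real.exp (-(m:ℝ) * q ^ ((k:ℝ)+1)) := by
      rw [← Real.exp_nat_mul]
      congr 1
      rw [show ((k:ℝ)+1) = ((k+1:ℕ):ℝ) by push_cast; ring, Real.rpow_natCast]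
      ring
    exact h3.trans_eq h4
  have hg_int : IntegrableOn (fun q : ℝ => Real.exp (-(m:ℝ) * q ^ ((k:ℝ)+1))) (Ioi 0) := by
    have := integrableOn_rpow_mul_exp_neg_mul_rpow (p := (k:ℝ)+1) (s := 0) (b := (m:ℝ))
      (by norm_num) (by exact_mod_cast Nat.le_add_left 1 k) hmR
    simpa using this
  have hf_int : IntegrableOn (fun q : ℝ => (1 - q ^ (k + 1)) ^ m) (Ioc 0 1) := by
    apply Continuous.integrableOn_Ioc
    continuity
  calc (∫ q in Ioc (0:ℝ) 1, (1 - q ^ (k + 1)) ^ m)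
      ≤ ∫ q in Ioc (0:ℝ) 1, Real.exp (-(m:ℝ) * q ^ ((k:ℝ)+1)) :=
        setIntegral_mono_on hf_int (hg_int.mono_set Set.Ioc_subset_Ioi_self)
          measurableSet_Ioc hconv
    _ ≤ ∫ q in Ioi (0:ℝ), Real.exp (-(m:ℝ) * q ^ ((k:ℝ)+1)) := by
        apply setIntegral_mono_set hg_int
        · filter_upwards with x using (Real.exp_pos _).le
        · exact HasSubset.Subset.eventuallyLE Set.Ioc_subset_Ioi_self
    _ = (m:ℝ) ^ (-1/((k:ℝ)+1)) * Real.Gamma (1/((k:ℝ)+1) + 1) :=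
        integral_exp_neg_mul_rpow (by positivity) hmR

lemma ratio_tendsto (k : ℕ) :
    Tendsto (fun n : ℕ => (n:ℝ) / (((n-2)/(k+1) : ℕ) : ℝ)) atTop (𝓝 ((k:ℝ)+1)) := by
  have hKR : (0:ℝ) < (k:ℝ)+1 := by positivity
  -- lower and upper auxiliary sequences
  have hlow : Tendsto (fun n : ℕ => ((k:ℝ)+1) * ((n:ℝ) / ((n:ℝ)-2))) atTop (𝓝 (((k:ℝ)+1) * 1)) := by
    apply Tendsto.const_mul
    have h1 : Tendsto (fun n : ℕ => 1 - 2/(n:ℝ)) atTop (𝓝 (1 - 0)) :=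
      tendsto_const_nhds.sub (tendsto_const_div_atTop_nhds_zero_nat 2)
    have h2 : Tendsto (fun n : ℕ => (1 - 2/(n:ℝ))⁻¹) atTop (𝓝 (1 - 0)⁻¹) :=
      h1.inv₀ (by norm_num)
    norm_num at h2
    apply h2.congr'
    filter_upwards [eventually_ge_atTop 3] with n hn
    have hn3 : (3:ℝ) ≤ (n:ℝ) := by exact_mod_cast hn
    field_simp
  have hup : Tendsto (fun n : ℕ => ((k:ℝ)+1) * ((n:ℝ) / ((n:ℝ)-2-k))) atTop (𝓝 (((k:ℝ)+1) * 1)) := by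
    apply Tendsto.const_mul
    have h1 : Tendsto (fun n : ℕ => 1 - (2+(k:ℝ))/(n:ℝ)) atTop (𝓝 (1 - 0)) :=
      tendsto_const_nhds.sub (tendsto_const_div_atTop_nhds_zero_nat (2+(k:ℝ)))
    have h2 : Tendsto (fun n : ℕ => (1 - (2+(k:ℝ))/(n:ℝ))⁻¹) atTop (𝓝 (1 - 0)⁻¹) :=
      h1.inv₀ (by norm_num)
    norm_num at h2
    apply h2.congr'
    filter_upwards [eventually_ge_atTop (k+3)] with n hn
    have hn3 : (k:ℝ)+3 ≤ (n:ℝ) := by exact_mod_cast hn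
    have h0 : (0:ℝ) < (n:ℝ) := by linarith
    have hd : (0:ℝ) < (n:ℝ)-2-(k:ℝ) := by linarith
    rw [show (1 - (2+(k:ℝ))/(n:ℝ)) = ((n:ℝ)-2-(k:ℝ))/(n:ℝ) by field_simp; ring, inv_div]
  rw [show ((k:ℝ)+1) = ((k:ℝ)+1) * 1 by ring]
  apply tendsto_of_tendsto_of_tendsto_of_le_of_le' hlow hup
  · -- lower bound eventually
    filter_upwards [eventually_ge_atTop (k+3)] with n hn
    set m : ℕ := (n-2)/(k+1) with hm
    have hmod := Nat.div_add_mod (n-2) (k+1)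
    have hr : (n-2) % (k+1) < k+1 := Nat.mod_lt _ (by omega)
    have hn2 : 2 ≤ n := by omega
    have hcast : ((n:ℝ)-2) = ((k:ℝ)+1) * (m:ℝ) + (((n-2)%(k+1) : ℕ):ℝ) := by
      have : ((n-2:ℕ):ℝ) = (((k+1) * m + (n-2)%(k+1) : ℕ):ℝ) := by rw [hmod]
      push_cast [hn2] at this
      linarith
    have hm1 : 1 ≤ m := by
      rw [hm, Nat.le_div_iff_mul_le (by omega)]
      omega
    have hmR : (1:ℝ) ≤ (m:ℝ) := by exact_mod_cast hm1
    have hrR : (0:ℝ) ≤ (((n-2)%(k+1) : ℕ):ℝ) := by positivity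
    have hn3 : (k:ℝ)+3 ≤ (n:ℝ) := by exact_mod_cast hn
    rw [mul_div_assoc']
    rw [div_le_div_iff₀ (by linarith) (by linarith)]
    nlinarith [hcast]
  · -- upper bound eventually
    filter_upwards [eventually_ge_atTop (k+3)] with n hn
    set m : ℕ := (n-2)/(k+1) with hm
    have hmod := Nat.div_add_mod (n-2) (k+1)
    have hr : (n-2) % (k+1) < k+1 := Nat.mod_lt _ (by omega)
    have hn2 : 2 ≤ n := by omega
    have hcast : ((n:ℝ)-2) = ((k:ℝ)+1) * (m:ℝ) + (((n-2)%(k+1) : ℕ):ℝ) := by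
      have : ((n-2:ℕ):ℝ) = (((k+1) * m + (n-2)%(k+1) : ℕ):ℝ) := by rw [hmod]
      push_cast [hn2] at this
      linarith
    have hm1 : 1 ≤ m := by
      rw [hm, Nat.le_div_iff_mul_le (by omega)]
      omega
    have hmR : (1:ℝ) ≤ (m:ℝ) := by exact_mod_cast hm1
    have hrR : (((n-2)%(k+1) : ℕ):ℝ) ≤ (k:ℝ) := by
      have : (n-2)%(k+1) ≤ k := by omega
      exact_mod_cast this
    have hn3 : (k:ℝ)+3 ≤ (n:ℝ) := by exact_mod_cast hn
    rw [mul_div_assoc']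
    rw [div_le_div_iff₀ (by linarith) (by linarith)]
    nlinarith [hcast]

lemma part1 (k : ℕ) (hk : 1 ≤ k) :
    limsup (fun n : ℕ =>
        (n : ℝ) ^ ((1 : ℝ) / (k + 1))
          * ∫ p in (0:ℝ)..1, (1 - (1 - p) ^ (k + 1)) ^ ((n - 2) / (k + 1) : ℕ)) atTop
        ≤ Real.Gamma (1 + 1 / ((k:ℝ) + 1)) * ((k : ℝ) + 1) ^ ((1 : ℝ) / ((k:ℝ) + 1)) := by
  have hKR : (0:ℝ) < (k:ℝ)+1 := by positivity
  set c : ℝ := 1/((k:ℝ)+1) with hc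
  set G : ℝ := Real.Gamma (1 + c) with hG
  have hGpos : 0 < G := Real.Gamma_pos_of_pos (by positivity)
  set g : ℕ → ℝ := fun n => G * ((n:ℝ) / (((n-2)/(k+1) : ℕ) : ℝ)) ^ c with hgdef
  have h_g_tendsto : Tendsto g atTop (𝓝 (G * ((k:ℝ)+1) ^ c)) := by
    apply Tendsto.const_mul
    exact ((Real.continuousAt_rpow_const ((k:ℝ)+1) c (Or.inl hKR.ne')).tendsto).comp
      (ratio_tendsto k)
  have h_f_nonneg : ∀ n : ℕ, 0 ≤ (n : ℝ) ^ ((1 : ℝ) / (k + 1))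
      * ∫ p in (0:ℝ)..1, (1 - (1 - p) ^ (k + 1)) ^ ((n - 2) / (k + 1) : ℕ) := by
    intro n
    apply mul_nonneg (Real.rpow_nonneg (by positivity) _)
    apply intervalIntegral.integral_nonneg zero_le_one
    intro p hp
    apply pow_nonneg
    have h1 : (1 - p) ^ (k+1) ≤ 1 := by
      apply pow_le_one₀ (by linarith [hp.2]) (by linarith [hp.1])
    linarith
  have h_fg : ∀ᶠ n : ℕ in atTop, (n : ℝ) ^ ((1 : ℝ) / (k + 1))
      * (∫ p in (0:ℝ)..1, (1 - (1 - p) ^ (k + 1)) ^ ((n - 2) / (k + 1) : ℕ)) ≤ g n := by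
    filter_upwards [eventually_ge_atTop (k+3)] with n hn
    set m : ℕ := (n-2)/(k+1) with hm
    have hm1 : 1 ≤ m := by
      rw [hm, Nat.le_div_iff_mul_le (by omega)]
      omega
    have hmR : (1:ℝ) ≤ (m:ℝ) := by exact_mod_cast hm1
    have hnR : (0:ℝ) < (n:ℝ) := by
      have : 0 < n := by omega
      exact_mod_cast this
    have h1 := int_bound k m hm1
    calc (n : ℝ) ^ ((1 : ℝ) / (k + 1))
          * (∫ p in (0:ℝ)..1, (1 - (1 - p) ^ (k + 1)) ^ m)
        ≤ (n : ℝ) ^ ((1 : ℝ) / (k + 1))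
            * ((m:ℝ) ^ (-1/((k:ℝ)+1)) * Real.Gamma (1/((k:ℝ)+1) + 1)) := by
          apply mul_le_mul_of_nonneg_left h1 (Real.rpow_nonneg hnR.le _)
      _ = g n := by
          rw [hgdef]
          simp only
          rw [hG, add_comm (1:ℝ) c, hc]
          rw [Real.div_rpow hnR.le (by positivity : (0:ℝ) ≤ (m:ℝ)),
            show -1/((k:ℝ)+1) = -(1/((k:ℝ)+1)) by ring,
            Real.rpow_neg (by positivity : (0:ℝ) ≤ (m:ℝ))]
          ring
  have hcob : IsCoboundedUnder (· ≤ ·) atTop (fun n : ℕ =>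
      (n : ℝ) ^ ((1 : ℝ) / (k + 1))
        * ∫ p in (0:ℝ)..1, (1 - (1 - p) ^ (k + 1)) ^ ((n - 2) / (k + 1) : ℕ)) := by
    apply IsBoundedUnder.isCoboundedUnder_le
    exact isBoundedUnder_of ⟨0, fun n => h_f_nonneg n⟩
  calc limsup (fun n : ℕ =>
        (n : ℝ) ^ ((1 : ℝ) / (k + 1))
          * ∫ p in (0:ℝ)..1, (1 - (1 - p) ^ (k + 1)) ^ ((n - 2) / (k + 1) : ℕ)) atTop
      ≤ limsup g atTop := limsup_le_limsup h_fg hcob h_g_tendsto.isBoundedUnder_le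
    _ = G * ((k:ℝ)+1) ^ c := h_g_tendsto.limsup_eq


/-- For fixed `k ≥ 1` and `m_n = ⌊(n−2)/(k+1)⌋`,
`limsup_{n→∞} n^{1/(k+1)} ∫₀¹ (1−(1−p)^{k+1})^{m_n} dp
  ≤ Γ(1+1/(k+1)) (k+1)^{1/(k+1)} ≤ Γ(4/3) · 3^{1/3}`. -/
theorem stmt15 (k : ℕ) (hk : 1 ≤ k) :
    limsup (fun n : ℕ =>
        (n : ℝ) ^ ((1 : ℝ) / (k + 1))
          * ∫ p in (0:ℝ)..1, (1 - (1 - p) ^ (k + 1)) ^ ((n - 2) / (k + 1) : ℕ)) atTop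
        ≤ Real.Gamma (1 + 1 / (k + 1)) * ((k : ℝ) + 1) ^ ((1 : ℝ) / (k + 1)) ∧
      Real.Gamma (1 + 1 / (k + 1)) * ((k : ℝ) + 1) ^ ((1 : ℝ) / (k + 1))
        ≤ Real.Gamma (4 / 3) * (3 : ℝ) ^ ((1 : ℝ) / 3) := by
  refine ⟨part1 k hk, ?_⟩
  have h := part2 (k+1) (by omega)
  push_cast at h
  exact h
end
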